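/- Let p > 2 be prime and r ≥ 2 an integer, with t = v_p(r-1) the p-adic valuation of r-1. Then for every integer n ≥ 2, one has v_p(C(r,n)) + n ≥ t + 2, where C(r,n) is the binomial coefficient. -/

import Mathlib

private lemma val_bound (p : ℕ) [Fact p.Prime] (hp2 : 3 ≤ p) (m : ℕ) (hm : 0 < m) :
    2 * padicValNat p m + 1 ≤ m := by
  have h2 : p ^ padicValNat p m ≤ m := Nat.le_of_dvd hm pow_padicValNat_dvd
  have h3 : 2 * padicValNat p m + 1 ≤ 3 ^ padicValNat p m := by
    induction padicValNat p m with
    | zero => simp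
    | succ k ih => rw [pow_succ]; omega
  calc 2 * padicValNat p m + 1 ≤ 3 ^ padicValNat p m := h3
    _ ≤ p ^ padicValNat p m := Nat.pow_le_pow_left hp2 _
    _ ≤ m := h2

/-- Lemma 2.1(1): for p > 2 prime, r ≥ 2, t = v_p(r-1), and n ≥ 2,
    v_p(C(r,n)) + n ≥ t + 2 (valuations taken in ℕ∞ so that v_p(0) = ⊤). -/
theorem stmt_0 (p : ℕ) (hp : p.Prime) (hp2 : 2 < p) (r : ℕ) (hr : 2 ≤ r)
    (t : ℕ) (ht : t = padicValNat p (r - 1)) :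
    ∀ n : ℕ, 2 ≤ n → emultiplicity p (r.choose n) + n ≥ (t : ℕ∞) + 2 := by
  haveI : Fact p.Prime := ⟨hp⟩
  intro n hn
  by_cases hnr : r < n
  · rw [Nat.choose_eq_zero_of_lt hnr, emultiplicity_zero, top_add]
    exact le_top
  push_neg at hnr
  obtain ⟨a, rfl⟩ : ∃ a, r = a + 2 := ⟨r - 2, by omega⟩
  obtain ⟨b, rfl⟩ : ∃ b, n = b + 2 := ⟨n - 2, by omega⟩
  have hba : b ≤ a := by omega
  -- key identity
  have E1 : (a + 2) * (a + 1).choose (b + 1) = (a + 2).choose (b + 2) * (b + 2) :=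
    Nat.add_one_mul_choose_eq (a + 1) (b + 1)
  have E2 : (a + 1) * a.choose b = (a + 1).choose (b + 1) * (b + 1) :=
    Nat.add_one_mul_choose_eq a b
  have key : (a + 2).choose (b + 2) * ((b + 2) * (b + 1)) =
      (a + 2) * ((a + 1) * a.choose b) := by
    calc (a + 2).choose (b + 2) * ((b + 2) * (b + 1))
        = ((a + 2).choose (b + 2) * (b + 2)) * (b + 1) := by ring
      _ = ((a + 2) * (a + 1).choose (b + 1)) * (b + 1) := by rw [E1]
      _ = (a + 2) * ((a + 1).choose (b + 1) * (b + 1)) := by ring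
      _ = (a + 2) * ((a + 1) * a.choose b) := by rw [E2]
  have hC : 0 < (a + 2).choose (b + 2) := Nat.choose_pos (by omega)
  have hC' : 0 < a.choose b := Nat.choose_pos hba
  -- take valuations
  have hv : padicValNat p ((a + 2).choose (b + 2)) + (padicValNat p (b + 2)
      + padicValNat p (b + 1)) = padicValNat p (a + 2) + (padicValNat p (a + 1)
      + padicValNat p (a.choose b)) := by
    have := congrArg (padicValNat p) key
    rwa [padicValNat.mul (by omega) (by positivity),
      padicValNat.mul (by omega) (by omega),
      padicValNat.mul (by omega) (by positivity),
      padicValNat.mul (by omega) (by omega)] at this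
  -- coprimality: p can't divide both b+2 and b+1
  have hzero : padicValNat p (b + 2) = 0 ∨ padicValNat p (b + 1) = 0 := by
    by_cases h : p ∣ b + 2
    · right
      apply padicValNat.eq_zero_of_not_dvd
      intro h'
      have h1 : p ∣ (b + 2) - (b + 1) := Nat.dvd_sub h h'
      simp [Nat.dvd_one] at h1
      omega
    · left; exact padicValNat.eq_zero_of_not_dvd h
  have b1 := val_bound p (by omega) (b + 2) (by omega)
  have b2 := val_bound p (by omega) (b + 1) (by omega)
  have hbnd : padicValNat p (b + 2) + padicValNat p (b + 1) ≤ b := by omega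
  have ht' : t = padicValNat p (a + 1) := by simpa using ht
  have hfinal : t + 2 ≤ padicValNat p ((a + 2).choose (b + 2)) + (b + 2) := by omega
  rw [ge_iff_le, ← padicValNat_eq_emultiplicity hC.ne']
  exact_mod_cast hfinal
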